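/- arXiv:1306.2092 — 2 statements merged into one kernel-verified Lean document; each statement's English description precedes it below -/
import Mathlib

section
/- Let f, g ∈ A with f² = g² = -1 and x ∈ A, and set x₊ = ½(x + f x g), x₋ = ½(x - f x g). Then for all α, β ∈ ℝ: exp(α f) · x₊ · exp(β g) = x₊ · exp((β - α) g) = exp((α - β) f) · x₊, and exp(α f) · x₋ · exp(β g) = x₋ · exp((β + α) g) = exp((α + β) f) · x₋. -/
open NormedSpace

private lemma semiconj_exp {A : Type*} [NormedRing A] [NormedAlgebra ℝ A] [CompleteSpace A]
    {c a b : A} (h : SemiconjBy c a b) : c * exp a = exp b * c := by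
  simp only [exp_eq_tsum ℝ]
  rw [← (expSeries_summable' (𝕂 := ℝ) a).tsum_mul_left c,
    ← (expSeries_summable' (𝕂 := ℝ) b).tsum_mul_right c]
  congr 1
  funext n
  rw [mul_smul_comm, smul_mul_assoc, (h.pow_right n).eq]

/-- The general identity `e^{αf} x± e^{βg} = x± e^{(β∓α)g} = e^{(α∓β)f} x±`. -/
theorem exp_pm_split {A : Type*} [NormedRing A] [NormedAlgebra ℝ A] [CompleteSpace A]
    (f g : A) (hf : f ^ 2 = -1) (hg : g ^ 2 = -1) (x : A) (α β : ℝ) :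
    let xp : A := (1 / 2 : ℝ) • (x + f * x * g)
    let xm : A := (1 / 2 : ℝ) • (x - f * x * g)
    (exp (α • f) * xp * exp (β • g) = xp * exp ((β - α) • g) ∧
      exp (α • f) * xp * exp (β • g) = exp ((α - β) • f) * xp) ∧
    (exp (α • f) * xm * exp (β • g) = xm * exp ((β + α) • g) ∧
      exp (α • f) * xm * exp (β • g) = exp ((α + β) • f) * xm) := by
  intro xp xm
  letI : NormedAlgebra ℚ A := NormedAlgebra.restrictScalars ℚ ℝ A
  have hf' : f * f = -1 := by rw [← sq]; exact hf
  have hg' : g * g = -1 := by rw [← sq]; exact hg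
  -- basic intertwining relations
  have hxp : xp * g = -(f * xp) := by
    show ((1 / 2 : ℝ) • (x + f * x * g)) * g = -(f * ((1 / 2 : ℝ) • (x + f * x * g)))
    rw [smul_mul_assoc, mul_smul_comm, ← smul_neg]
    congr 1
    have : (x + f * x * g) * g = f * x * (g * g) + x * g := by noncomm_ring
    rw [this, hg']
    have : f * (x + f * x * g) = (f * f) * x * g + f * x := by noncomm_ring
    rw [this, hf']
    noncomm_ring
  have hxm : xm * g = f * xm := by
    show ((1 / 2 : ℝ) • (x - f * x * g)) * g = f * ((1 / 2 : ℝ) • (x - f * x * g))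
    rw [smul_mul_assoc, mul_smul_comm]
    congr 1
    have : (x - f * x * g) * g = -(f * x * (g * g)) + x * g := by noncomm_ring
    rw [this, hg']
    have : f * (x - f * x * g) = -((f * f) * x * g) + f * x := by noncomm_ring
    rw [this, hf']
    noncomm_ring
  -- semiconjugation lemmas for scalar multiples
  have sp : ∀ t : ℝ, SemiconjBy xp (t • g) ((-t) • f) := by
    intro t
    show xp * (t • g) = ((-t) • f) * xp
    rw [mul_smul_comm, hxp, smul_neg, ← smul_mul_assoc, neg_smul, neg_mul]
  have sm : ∀ t : ℝ, SemiconjBy xm (t • g) (t • f) := by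
    intro t
    show xm * (t • g) = (t • f) * xm
    rw [mul_smul_comm, hxm, ← smul_mul_assoc]
  have comf : ∀ s t : ℝ, Commute (s • f) (t • f) :=
    fun s t => ((Commute.refl f).smul_left s).smul_right t
  have comg : ∀ s t : ℝ, Commute (s • g) (t • g) :=
    fun s t => ((Commute.refl g).smul_left s).smul_right t
  refine ⟨⟨?_, ?_⟩, ⟨?_, ?_⟩⟩
  · have sp' : SemiconjBy xp ((-α) • g) (α • f) := by
      have := sp (-α); rwa [neg_neg] at this
    rw [← semiconj_exp sp', mul_assoc, ← exp_add_of_commute (comg (-α) β), ← add_smul]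
    congr 2 <;> ring
  · rw [mul_assoc, semiconj_exp (sp β), ← mul_assoc,
      ← exp_add_of_commute (comf α (-β)), ← add_smul]
    congr 2 <;> ring
  · rw [← semiconj_exp (sm α), mul_assoc, ← exp_add_of_commute (comg α β), ← add_smul]
    congr 2 <;> ring
  · rw [mul_assoc, semiconj_exp (sm β), ← mul_assoc,
      ← exp_add_of_commute (comf α β), ← add_smul]
end

section
/- Let f, g be pure unit quaternions (f² = g² = -1 in ℍ). For quaternions x, y, define x± = ½(x ± f x g). Then the real part of x₊ · conj(y₋) is zero, and the real part of x₋ · conj(y₊) is zero. -/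
lemma re_mul_comm (a b : Quaternion ℝ) : (a * b).re = (b * a).re := by
  simp only [Quaternion.re_mul]; ring

lemma star_of_sq_neg_one {f : Quaternion ℝ} (hf : f ^ 2 = -1) : star f = -f := by
  have h := hf
  rw [sq, Quaternion.ext_iff] at h
  simp only [Quaternion.re_mul, Quaternion.imI_mul, Quaternion.imJ_mul, Quaternion.imK_mul,
    Quaternion.re_neg, Quaternion.imI_neg, Quaternion.imJ_neg, Quaternion.imK_neg,
    Quaternion.re_one, Quaternion.imI_one, Quaternion.imJ_one, Quaternion.imK_one] at h
  obtain ⟨h1, h2, h3, h4⟩ := h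
  have hre : f.re = 0 := by nlinarith [sq_nonneg f.re, sq_nonneg f.imI, sq_nonneg f.imJ, sq_nonneg f.imK]
  rw [Quaternion.ext_iff]
  simp [Quaternion.re_star, hre]

lemma aux_orth (f g x y : Quaternion ℝ) (hf : f ^ 2 = -1) (hg : g ^ 2 = -1) :
    ((x + f * x * g) * star (y - f * y * g)).re = 0 := by
  have hfs := star_of_sq_neg_one hf
  have hgs := star_of_sq_neg_one hg
  have hf2 : f * f = -1 := by rw [← sq]; exact hf
  have hg2 : g * g = -1 := by rw [← sq]; exact hg
  have hstar : star (f * y * g) = g * star y * f := by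
    simp [star_mul, hfs, hgs, mul_assoc]
  rw [star_sub, hstar, mul_sub, add_mul, add_mul, Quaternion.re_sub, Quaternion.re_add,
    Quaternion.re_add]
  have e1 : (f * x * g * (g * star y * f)).re = (x * star y).re := by
    have h0 : f * x * g * (g * star y * f) = f * (x * ((g * g) * (star y * f))) := by
      simp only [mul_assoc]
    rw [h0, hg2]
    rw [re_mul_comm]
    have h1 : x * (-1 * (star y * f)) * f = -(x * (star y * (f * f))) := by
      simp only [neg_one_mul, mul_neg, neg_mul, mul_assoc, one_mul]
    rw [h1, hf2]
    simp
  have e2 : (x * (g * star y * f)).re = (f * x * g * star y).re := by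
    rw [re_mul_comm x (g * star y * f), re_mul_comm (f * x * g) (star y),
      show g * star y * f * x = g * (star y * (f * x)) by simp only [mul_assoc],
      re_mul_comm g]
    simp only [mul_assoc]
  rw [e1, e2]; ring

/-- Orthogonality of the two ± split parts in the quaternions:
`Re(x₊ conj(y₋)) = 0` and `Re(x₋ conj(y₊)) = 0`. -/
theorem pm_split_orthogonal (f g : Quaternion ℝ) (hf : f ^ 2 = -1) (hg : g ^ 2 = -1)
    (x y : Quaternion ℝ) :
    ((((1 / 2 : ℝ) • (x + f * x * g)) * star ((1 / 2 : ℝ) • (y - f * y * g))).re = 0) ∧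
    ((((1 / 2 : ℝ) • (x - f * x * g)) * star ((1 / 2 : ℝ) • (y + f * y * g))).re = 0) := by
  constructor
  · rw [Quaternion.star_smul, smul_mul_smul_comm, Quaternion.re_smul, aux_orth f g x y hf hg]
    simp
  · have hf' : (-f) ^ 2 = -1 := by rw [neg_sq]; exact hf
    have h := aux_orth (-f) g x y hf' hg
    rw [show x + -f * x * g = x - f * x * g by simp [neg_mul, sub_eq_add_neg], show y - -f * y * g = y + f * y * g by simp [neg_mul]] at h
    rw [Quaternion.star_smul, smul_mul_smul_comm, Quaternion.re_smul, h]
    simp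
end
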